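/- Under Cooper's truth tables, Import-Export holds as an extensional equivalence: for all truth values a,b,c ∈ {0,1/2,1}, f→(f∧'(a,b), c) = f→(a, f→(b,c)), where f∧' is quasi-conjunction and f→ is the Cooper conditional. -/
import Mathlib


/-- The set of trivalent truth values {0, 1/2, 1} inside ℚ. -/
def Tri (x : ℚ) : Prop := x = 0 ∨ x = 1/2 ∨ x = 1

/-- Cooper conditional: f→(0,y)=1/2, f→(1,y)=y, f→(1/2,y)=y (on trivalent values). -/
def tcond (a b : ℚ) : ℚ := if a = 0 then 1/2 else b

/-- Quasi-conjunction. -/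
def tand (a b : ℚ) : ℚ :=
  if a = 0 ∨ b = 0 then 0 else if a = 1 ∨ b = 1 then 1 else 1/2

/-- Quasi-disjunction. -/
def tor (a b : ℚ) : ℚ :=
  if a = 1 ∨ b = 1 then 1 else if a = 0 ∨ b = 0 then 0 else 1/2

/-- Strong Kleene negation. -/
def tneg (a : ℚ) : ℚ := 1 - a

/-- Import-Export as extensional equivalence under Cooper's truth tables. -/
theorem import_export (a b c : ℚ) (ha : Tri a) (hb : Tri b) (hc : Tri c) :
    tcond (tand a b) c = tcond a (tcond b c) := by
  rcases ha with h|h|h <;> rcases hb with h2|h2|h2 <;> subst h <;> subst h2 <;> simp [tcond, tand]
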